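/- For every c ∈ ℂ there exists a real constant D > 0, depending only on c, with the following property. Let A, B ∈ SU(2,1) satisfy tr(A·B·A⁻¹·B⁻¹) = c and f(tr(A)) > 0, and define u : ℤ → ℂ by u(n) = tr(Aⁿ · B) (integer powers taken in the group SU(2,1)). If there do NOT exist real numbers k > 0, a > 1 and N ∈ ℕ such that |u(n)| ≥ k·a^|n| for every integer n with |n| ≥ N, then the set {n ∈ ℤ : |u(n)| < D} is infinite. -/

import Mathlib

open Matrix

/-- The matrix `J = diag(1,1,-1)`. -/
def Jmat : Matrix (Fin 3) (Fin 3) ℂ := Matrix.diagonal ![1, 1, -1]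

/-- `A ∈ SU(2,1)`: `det A = 1` and `Aᴴ J A = J` (equivalently `A⁻¹ = J Aᴴ J`). -/
def IsSU21 (A : Matrix (Fin 3) (Fin 3) ℂ) : Prop :=
  A.det = 1 ∧ Aᴴ * Jmat * A = Jmat

/-- The function `f(t) = |t|⁴ − 8 Re(t³) + 18 |t|² − 27`. -/
noncomputable def fdisc (t : ℂ) : ℝ :=
  ‖t‖ ^ 4 - 8 * (t ^ 3).re + 18 * ‖t‖ ^ 2 - 27

noncomputable def Complex.abs : AbsoluteValue ℂ ℝ := NormedField.toAbsoluteValue ℂ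

lemma Complex.abs_apply (z : ℂ) : Complex.abs z = ‖z‖ := rfl

lemma Complex.sq_abs (z : ℂ) : Complex.abs z ^ 2 = Complex.normSq z := Complex.sq_norm z

lemma Complex.normSq_eq_abs (z : ℂ) : Complex.normSq z = Complex.abs z ^ 2 :=
  (Complex.sq_norm z).symm

lemma Complex.abs_conj (z : ℂ) : Complex.abs ((starRingEnd ℂ) z) = Complex.abs z :=
  Complex.norm_conj z

open Polynomial in
lemma cubic_roots (t s : ℂ) : ∃ a b c : ℂ, ∀ z : ℂ,
    z^3 - t*z^2 + s*z - 1 = (z-a)*(z-b)*(z-c) := by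
  classical
  set p : ℂ[X] := X^3 - C t * X^2 + C s * X - C 1 with hp
  have hdeg : p.degree = 3 := by
    unfold p
    compute_degree!
  have hnd : p.natDegree = 3 := natDegree_eq_of_degree_eq_some hdeg
  have hpm : p.Monic := by
    unfold Polynomial.Monic Polynomial.leadingCoeff
    rw [hnd]
    unfold p
    simp [coeff_X_pow, coeff_C, coeff_one]
  have hsplit : p.Splits := IsAlgClosed.splits p
  have hroots : p.roots.card = 3 := by
    rw [(splits_iff_card_roots (f := p)).mp hsplit, hnd]
  obtain ⟨a, ha⟩ := Multiset.card_pos_iff_exists_mem.mp (by rw [hroots]; norm_num)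
  obtain ⟨r1, hr1⟩ := Multiset.exists_cons_of_mem ha
  have hcard1 : r1.card = 2 := by
    have := hroots; rw [hr1] at this; simpa using this
  obtain ⟨b, hb⟩ := Multiset.card_pos_iff_exists_mem.mp (by rw [hcard1]; norm_num)
  obtain ⟨r2, hr2⟩ := Multiset.exists_cons_of_mem hb
  have hcard2 : r2.card = 1 := by
    have := hcard1; rw [hr2] at this; simpa using this
  obtain ⟨c, hc⟩ := Multiset.card_eq_one.mp hcard2
  have hfact : p = (X - C a) * (X - C b) * (X - C c) := by
    have h := Polynomial.Splits.eq_prod_roots_of_monic hsplit hpm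
    rw [hr1, hr2, hc] at h
    simpa [mul_assoc] using h
  refine ⟨a, b, c, fun z => ?_⟩
  have h2 := congrArg (Polynomial.eval z) hfact
  rw [hp] at h2
  simpa using h2

open Polynomial in
lemma cubic_rel (t s : ℂ) : ∃ a b c : ℂ,
    a + b + c = t ∧ a*b + b*c + c*a = s ∧ a*b*c = 1 := by
  obtain ⟨a, b, c, h⟩ := cubic_roots t s
  have h0 := h 0
  have h1 := h 1
  have hm1 := h (-1)
  have h2 := h 2
  refine ⟨a, b, c, by linear_combination (h1 + hm1)/2 - h0,
    by linear_combination (hm1 - h1)/2, by linear_combination h0⟩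

lemma fdisc_complex (t : ℂ) :
    (fdisc t : ℂ) = (t * (starRingEnd ℂ) t)^2 - 4*t^3 - 4*((starRingEnd ℂ) t)^3
      + 18*(t*(starRingEnd ℂ) t) - 27 := by
  have k1 : t * (starRingEnd ℂ) t = (Complex.abs t : ℂ)^2 := by
    rw [Complex.mul_conj, ← Complex.sq_abs]
    push_cast
    ring
  have k2 : t ^ 3 + (starRingEnd ℂ) t ^ 3 = 2 * (((t^3).re : ℝ) : ℂ) := by
    rw [← _root_.map_pow, Complex.add_conj]
    push_cast
    ring
  unfold fdisc
  rw [← Complex.abs_apply]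
  push_cast
  linear_combination (-((Complex.abs t : ℂ)^2 + t*(starRingEnd ℂ) t + 18)) * k1 + 4 * k2

lemma pack_triple (t x y m : ℂ) (h1 : x + m + y = t)
    (h2 : x*m + m*y + y*x = (starRingEnd ℂ) t) (h3 : x*m*y = 1)
    (hx : 1 < Complex.abs x) (hy : Complex.abs y = (Complex.abs x)⁻¹) :
    ∃ a b c : ℂ, a + b + c = t ∧ a*b + b*c + c*a = (starRingEnd ℂ) t ∧ a*b*c = 1 ∧
      1 < Complex.abs a ∧ Complex.abs b = 1 ∧ Complex.abs c = (Complex.abs a)⁻¹ := by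
  refine ⟨x, m, y, h1, h2, h3, hx, ?_, hy⟩
  have habs := congrArg Complex.abs h3
  rw [_root_.map_mul, _root_.map_mul, _root_.map_one, hy] at habs
  have hx0 : (0:ℝ) < Complex.abs x := by linarith
  field_simp at habs
  exact habs

lemma roots_structure (t : ℂ) (hf : 0 < fdisc t) :
    ∃ a b c : ℂ, a + b + c = t ∧ a*b + b*c + c*a = (starRingEnd ℂ) t ∧ a*b*c = 1 ∧
      1 < Complex.abs a ∧ Complex.abs b = 1 ∧ Complex.abs c = (Complex.abs a)⁻¹ := by
  obtain ⟨a, b, c, e1, e2, e3⟩ := cubic_rel t ((starRingEnd ℂ) t)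
  have key : (fdisc t : ℂ) = ((a-b)*(b-c)*(c-a))^2 := by
    rw [fdisc_complex, ← e2, ← e1]
    linear_combination (4*(a+b+c)^3 - 18*(a+b+c)*(a*b+b*c+c*a) + 27*(1+a*b*c)) * e3
  have ha0 : a ≠ 0 := fun h => by simp [h] at e3
  have hb0 : b ≠ 0 := fun h => by rw [h] at e3; simp at e3
  have hc0 : c ≠ 0 := fun h => by rw [h] at e3; simp at e3
  -- not all roots on the unit circle
  have hnotall : ¬ (Complex.abs a = 1 ∧ Complex.abs b = 1 ∧ Complex.abs c = 1) := by
    rintro ⟨hA, hB, hC⟩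
    have hca : (starRingEnd ℂ) a = a⁻¹ := by
      refine eq_inv_of_mul_eq_one_right ?_
      rw [Complex.mul_conj, Complex.normSq_eq_abs, hA]; norm_num
    have hcb : (starRingEnd ℂ) b = b⁻¹ := by
      refine eq_inv_of_mul_eq_one_right ?_
      rw [Complex.mul_conj, Complex.normSq_eq_abs, hB]; norm_num
    have hcc : (starRingEnd ℂ) c = c⁻¹ := by
      refine eq_inv_of_mul_eq_one_right ?_
      rw [Complex.mul_conj, Complex.normSq_eq_abs, hC]; norm_num
    set d := (a-b)*(b-c)*(c-a) with hd
    have hid : (a⁻¹-b⁻¹)*(b⁻¹-c⁻¹)*(c⁻¹-a⁻¹) * (a*b*c)^2 = -((a-b)*(b-c)*(c-a)) := by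
      field_simp
      ring
    have hconjd : (starRingEnd ℂ) d = -d := by
      have : (starRingEnd ℂ) d = (a⁻¹-b⁻¹)*(b⁻¹-c⁻¹)*(c⁻¹-a⁻¹) := by
        rw [hd, _root_.map_mul, _root_.map_mul, _root_.map_sub, _root_.map_sub, _root_.map_sub, hca, hcb, hcc]
      rw [this, ← hd] at *
      calc (a⁻¹-b⁻¹)*(b⁻¹-c⁻¹)*(c⁻¹-a⁻¹) = (a⁻¹-b⁻¹)*(b⁻¹-c⁻¹)*(c⁻¹-a⁻¹) * (a*b*c)^2 := by
            rw [e3]; ring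
        _ = -d := hid
    have hdre : d.re = 0 := by
      have := congrArg Complex.re hconjd
      rw [Complex.conj_re, Complex.neg_re] at this
      linarith
    have hfd : fdisc t = (d^2).re := by
      have := congrArg Complex.re key
      rwa [Complex.ofReal_re] at this
    rw [sq, Complex.mul_re, hdre] at hfd
    nlinarith [sq_nonneg d.im]
  -- root predicate
  have hroot : ∀ x : ℂ, (x-a)*(x-b)*(x-c) = x^3 - t*x^2 + (starRingEnd ℂ) t * x - 1 := by
    intro x
    rw [← e2, ← e1, ← e3]
    ring
  have hinv : ∀ x : ℂ, (x-a)*(x-b)*(x-c) = 0 → x ≠ 0 →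
      ((((starRingEnd ℂ) x)⁻¹)-a)*((((starRingEnd ℂ) x)⁻¹)-b)*((((starRingEnd ℂ) x)⁻¹)-c) = 0 := by
    intro x hx hx0
    have hx' : x^3 - t*x^2 + (starRingEnd ℂ) t * x - 1 = 0 := by rw [← hroot]; exact hx
    have hcx : ((starRingEnd ℂ) x)^3 - (starRingEnd ℂ) t * ((starRingEnd ℂ) x)^2
        + t * (starRingEnd ℂ) x - 1 = 0 := by
      have := congrArg (starRingEnd ℂ) hx'
      simpa using this
    have hxc0 : (starRingEnd ℂ) x ≠ 0 := by simpa using hx0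
    set y := ((starRingEnd ℂ) x)⁻¹ with hy
    rw [hroot]
    have : y^3 - t*y^2 + (starRingEnd ℂ) t * y - 1 =
        -((((starRingEnd ℂ) x)^3 - (starRingEnd ℂ) t * ((starRingEnd ℂ) x)^2
          + t * (starRingEnd ℂ) x - 1)) * y^3 := by
      rw [hy]
      field_simp
      ring
    rw [this, hcx]
    ring
  -- produce a root of modulus > 1
  have hRa : (a-a)*(a-b)*(a-c) = 0 := by ring
  have hRb : (b-a)*(b-b)*(b-c) = 0 := by ring
  have hRc : (c-a)*(c-b)*(c-c) = 0 := by ring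
  have hbig : ∃ x : ℂ, (x-a)*(x-b)*(x-c) = 0 ∧ 1 < Complex.abs x := by
    have hne : Complex.abs a ≠ 1 ∨ Complex.abs b ≠ 1 ∨ Complex.abs c ≠ 1 := by
      by_contra h
      push_neg at h
      exact hnotall ⟨h.1, h.2.1, h.2.2⟩
    have step : ∀ x : ℂ, (x-a)*(x-b)*(x-c) = 0 → x ≠ 0 → Complex.abs x ≠ 1 →
        ∃ y : ℂ, (y-a)*(y-b)*(y-c) = 0 ∧ 1 < Complex.abs y := by
      intro x hx hx0 hx1
      rcases lt_or_gt_of_ne hx1 with h | h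
      · refine ⟨((starRingEnd ℂ) x)⁻¹, hinv x hx hx0, ?_⟩
        rw [_root_.map_inv₀, Complex.abs_conj]
        have : 0 < Complex.abs x := by simpa using hx0
        exact (one_lt_inv₀ this).mpr h
      · exact ⟨x, hx, h⟩
    rcases hne with h | h | h
    · exact step a hRa ha0 h
    · exact step b hRb hb0 h
    · exact step c hRc hc0 h
  obtain ⟨x, hxroot, hx1⟩ := hbig
  have hx0 : x ≠ 0 := by
    intro h; rw [h] at hx1; simp at hx1; linarith
  set y := ((starRingEnd ℂ) x)⁻¹ with hydef
  have hyroot := hinv x hxroot hx0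
  have hyabs : Complex.abs y = (Complex.abs x)⁻¹ := by
    rw [hydef, _root_.map_inv₀, Complex.abs_conj]
  have hxy : x ≠ y := by
    intro h
    rw [← h] at hyabs
    have hpos : 0 < Complex.abs x := by positivity
    field_simp at hyabs
    nlinarith
  have hxm : x = a ∨ x = b ∨ x = c := by
    rcases mul_eq_zero.mp hxroot with h | h
    · rcases mul_eq_zero.mp h with h | h
      · exact Or.inl (sub_eq_zero.mp h)
      · exact Or.inr (Or.inl (sub_eq_zero.mp h))
    · exact Or.inr (Or.inr (sub_eq_zero.mp h))
  have hym : y = a ∨ y = b ∨ y = c := by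
    rcases mul_eq_zero.mp hyroot with h | h
    · rcases mul_eq_zero.mp h with h | h
      · exact Or.inl (sub_eq_zero.mp h)
      · exact Or.inr (Or.inl (sub_eq_zero.mp h))
    · exact Or.inr (Or.inr (sub_eq_zero.mp h))
  rcases hxm with hx | hx | hx <;> rcases hym with hy | hy | hy
  · exact absurd (hx.trans hy.symm) hxy
  · exact pack_triple t x y c (by rw [hx, hy] at *; linear_combination e1)
      (by rw [hx, hy] at *; linear_combination e2) (by rw [hx, hy] at *; linear_combination e3)
      hx1 hyabs
  · exact pack_triple t x y b (by rw [hx, hy] at *; linear_combination e1)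
      (by rw [hx, hy] at *; linear_combination e2) (by rw [hx, hy] at *; linear_combination e3)
      hx1 hyabs
  · exact pack_triple t x y c (by rw [hx, hy] at *; linear_combination e1)
      (by rw [hx, hy] at *; linear_combination e2) (by rw [hx, hy] at *; linear_combination e3)
      hx1 hyabs
  · exact absurd (hx.trans hy.symm) hxy
  · exact pack_triple t x y a (by rw [hx, hy] at *; linear_combination e1)
      (by rw [hx, hy] at *; linear_combination e2) (by rw [hx, hy] at *; linear_combination e3)
      hx1 hyabs
  · exact pack_triple t x y b (by rw [hx, hy] at *; linear_combination e1)
      (by rw [hx, hy] at *; linear_combination e2) (by rw [hx, hy] at *; linear_combination e3)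
      hx1 hyabs
  · exact pack_triple t x y a (by rw [hx, hy] at *; linear_combination e1)
      (by rw [hx, hy] at *; linear_combination e2) (by rw [hx, hy] at *; linear_combination e3)
      hx1 hyabs
  · exact absurd (hx.trans hy.symm) hxy

noncomputable def scoeff (M : Matrix (Fin 3) (Fin 3) ℂ) : ℂ :=
  (M 0 0 * M 1 1 - M 0 1 * M 1 0) + (M 0 0 * M 2 2 - M 0 2 * M 2 0) + (M 1 1 * M 2 2 - M 1 2 * M 2 1)

lemma CH3 (M : Matrix (Fin 3) (Fin 3) ℂ) :
    M ^ 3 = M.trace • M ^ 2 - scoeff M • M + M.det • 1 := by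
  have h2 : M ^ 2 = M * M := sq M
  have h3 : M ^ 3 = M * M * M := by rw [pow_succ, h2]
  ext i j
  fin_cases i <;> fin_cases j <;>
    simp [h2, h3, Matrix.mul_apply, Fin.sum_univ_three, scoeff, Matrix.trace_fin_three,
      Matrix.det_fin_three, Matrix.one_apply] <;> ring

lemma scoeff_eq_trace_adjugate (M : Matrix (Fin 3) (Fin 3) ℂ) :
    scoeff M = M.adjugate.trace := by
  rw [Matrix.adjugate_fin_three, Matrix.trace_fin_three]
  simp [scoeff]
  ring

lemma Jmat_mul_Jmat : Jmat * Jmat = 1 := by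
  rw [Jmat, Matrix.diagonal_mul_diagonal]
  ext i j
  fin_cases i <;> fin_cases j <;> simp [Matrix.diagonal, Matrix.one_apply]

section basics
variable {A : Matrix (Fin 3) (Fin 3) ℂ}

lemma su21_det_isUnit (hA : IsSU21 A) : IsUnit A.det := by rw [hA.1]; exact isUnit_one

lemma su21_inv (hA : IsSU21 A) : A⁻¹ = Jmat * Aᴴ * Jmat := by
  apply Matrix.inv_eq_left_inv
  calc Jmat * Aᴴ * Jmat * A = Jmat * (Aᴴ * Jmat * A) := by noncomm_ring
    _ = 1 := by rw [hA.2, Jmat_mul_Jmat]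

lemma su21_scoeff (hA : IsSU21 A) : scoeff A = (starRingEnd ℂ) A.trace := by
  rw [scoeff_eq_trace_adjugate]
  have hadj : A.adjugate = A⁻¹ := by
    rw [Matrix.inv_def, hA.1]
    simp
  rw [hadj, su21_inv hA]
  rw [Matrix.trace_mul_cycle, Jmat_mul_Jmat, Matrix.one_mul]
  rw [Matrix.trace_conjTranspose]
  rfl

lemma su21_CH (hA : IsSU21 A) : A ^ 3 = A.trace • A ^ 2 - ((starRingEnd ℂ) A.trace) • A + 1 := by
  have := CH3 A
  rw [su21_scoeff hA, hA.1, one_smul] at this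
  exact this
end basics

set_option maxHeartbeats 2000000 in
lemma key_lemma (A B : Matrix (Fin 3) (Fin 3) ℂ) (hA : IsSU21 A) (hB : IsSU21 B)
    (a b c : ℂ) (e1 : a + b + c = A.trace)
    (e2 : a*b + b*c + c*a = (starRingEnd ℂ) A.trace) (e3 : a*b*c = 1)
    (ha1 : 1 < Complex.abs a) (hb1 : Complex.abs b = 1)
    (hc1 : Complex.abs c = (Complex.abs a)⁻¹) :
    ∃ α β γ : ℂ, (∀ n : ℤ, (A ^ n * B).trace = a^n * α + b^n * β + c^n * γ) ∧
      (α = 0 → Complex.abs β = 1) ∧ (γ = 0 → Complex.abs β = 1) := by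
  have hapos : (0:ℝ) < Complex.abs a := lt_trans one_pos ha1
  have hc_lt : Complex.abs c < 1 := by rw [hc1]; exact inv_lt_one_of_one_lt₀ ha1
  have hcpos : (0:ℝ) < Complex.abs c := by rw [hc1]; positivity
  have ha0 : a ≠ 0 := by intro h; rw [h] at ha1; simp at ha1; linarith
  have hb0 : b ≠ 0 := by intro h; rw [h] at hb1; simp at hb1
  have hc0 : c ≠ 0 := by intro h; rw [h] at hcpos; simp at hcpos
  have hab : a ≠ b := by intro h; rw [h, hb1] at ha1; linarith
  have hac : a ≠ c := by intro h; rw [h] at ha1; linarith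
  have hbc : b ≠ c := by intro h; rw [← h, hb1] at hc_lt; linarith
  have hab' : a - b ≠ 0 := sub_ne_zero.mpr hab
  have hac' : a - c ≠ 0 := sub_ne_zero.mpr hac
  have hbc' : b - c ≠ 0 := sub_ne_zero.mpr hbc
  have hba' : b - a ≠ 0 := sub_ne_zero.mpr (Ne.symm hab)
  have hca' : c - a ≠ 0 := sub_ne_zero.mpr (Ne.symm hac)
  have hcb' : c - b ≠ 0 := sub_ne_zero.mpr (Ne.symm hbc)
  have hCH := su21_CH hA
  -- the product of the three factors vanishes
  have hprod : (A - a•1) * ((A - b•1) * (A - c•1)) = 0 := by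
    have hexp : (A - a•1) * ((A - b•1) * (A - c•1))
        = A^3 - (a+b+c)•A^2 + (a*b+b*c+c*a)•A - (a*b*c)•1 := by
      have p2 : A * A = A ^ 2 := (sq A).symm
      have p3 : A * A ^ 2 = A ^ 3 := (pow_succ' A 2).symm
      simp only [Matrix.mul_sub, Matrix.sub_mul, smul_mul_assoc, mul_smul_comm, one_mul,
        mul_one, smul_smul, p2, p3]
      module
    rw [hexp, e1, e2, e3, hCH]
    module
  -- the three spectral projections
  set ra := ((a-b)*(a-c))⁻¹ with hra
  set rb := ((b-a)*(b-c))⁻¹ with hrb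
  set rc := ((c-a)*(c-b))⁻¹ with hrc
  set Pa := ra • ((A - b•1) * (A - c•1)) with hPa
  set Pb := rb • ((A - a•1) * (A - c•1)) with hPb
  set Pc := rc • ((A - a•1) * (A - b•1)) with hPc
  have hcommF : ∀ x y : ℂ, (A - x•1) * (A - y•1) = (A - y•1) * (A - x•1) := by
    intro x y
    simp only [Matrix.mul_sub, Matrix.sub_mul, smul_mul_assoc, mul_smul_comm, one_mul,
      mul_one, smul_smul]
    module
  have hsub_mul : ∀ x : ℂ, ∀ M : Matrix (Fin 3) (Fin 3) ℂ,
      (A - x•1) * M = A * M - x • M := by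
    intro x M
    rw [Matrix.sub_mul, smul_mul_assoc, one_mul]
  have hmul_sub : ∀ x : ℂ, ∀ M : Matrix (Fin 3) (Fin 3) ℂ,
      M * (A - x•1) = M * A - x • M := by
    intro x M
    rw [Matrix.mul_sub, mul_smul_comm, mul_one]
  have hAPa : A * Pa = a • Pa := by
    rw [hPa, mul_smul_comm, smul_comm a ra]
    congr 1
    have h1 : A * ((A - b•1) * (A - c•1)) - a • ((A - b•1) * (A - c•1)) = 0 := by
      rw [← hsub_mul]; exact hprod
    rw [← sub_eq_zero]; exact h1
  have hAPb : A * Pb = b • Pb := by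
    rw [hPb, mul_smul_comm, smul_comm b rb]
    congr 1
    have h1 : A * ((A - a•1) * (A - c•1)) - b • ((A - a•1) * (A - c•1)) = 0 := by
      rw [← hsub_mul]
      calc (A - b•1) * ((A - a•1) * (A - c•1)) = (A - a•1) * ((A - b•1) * (A - c•1)) := by
            rw [← Matrix.mul_assoc, ← Matrix.mul_assoc, hcommF b a]
        _ = 0 := hprod
    rw [← sub_eq_zero]; exact h1
  have hAPc : A * Pc = c • Pc := by
    rw [hPc, mul_smul_comm, smul_comm c rc]
    congr 1
    have h1 : A * ((A - a•1) * (A - b•1)) - c • ((A - a•1) * (A - b•1)) = 0 := by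
      rw [← hsub_mul]
      calc (A - c•1) * ((A - a•1) * (A - b•1))
          = (A - a•1) * ((A - b•1) * (A - c•1)) := by
            rw [← Matrix.mul_assoc, ← Matrix.mul_assoc, hcommF c a, Matrix.mul_assoc,
              Matrix.mul_assoc, hcommF c b]
        _ = 0 := hprod
    rw [← sub_eq_zero]; exact h1
  -- right versions
  have hXa : (A - b•1) * (A - c•1) * (A - a•1) = 0 := by
    rw [Matrix.mul_assoc, hcommF c a, ← Matrix.mul_assoc, hcommF b a, Matrix.mul_assoc]
    exact hprod
  have hXb : (A - a•1) * (A - c•1) * (A - b•1) = 0 := by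
    rw [Matrix.mul_assoc, hcommF c b]
    exact hprod
  have hXc : (A - a•1) * (A - b•1) * (A - c•1) = 0 := by
    rw [Matrix.mul_assoc]
    exact hprod
  have hPaA : Pa * A = a • Pa := by
    rw [hPa, smul_mul_assoc, smul_comm a ra]
    congr 1
    have h2 := hmul_sub a ((A - b•1) * (A - c•1))
    rw [hXa] at h2
    rw [← sub_eq_zero]
    exact h2.symm
  have hPbA : Pb * A = b • Pb := by
    rw [hPb, smul_mul_assoc, smul_comm b rb]
    congr 1
    have h2 := hmul_sub b ((A - a•1) * (A - c•1))
    rw [hXb] at h2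
    rw [← sub_eq_zero]
    exact h2.symm
  have hPcA : Pc * A = c • Pc := by
    rw [hPc, smul_mul_assoc, smul_comm c rc]
    congr 1
    have h2 := hmul_sub c ((A - a•1) * (A - b•1))
    rw [hXc] at h2
    rw [← sub_eq_zero]
    exact h2.symm
  have hdetA : IsUnit A.det := su21_det_isUnit hA
  have hAAinv : A * A⁻¹ = 1 := Matrix.mul_nonsing_inv A hdetA
  have hPinv : ∀ (P : Matrix (Fin 3) (Fin 3) ℂ) (x : ℂ), x ≠ 0 → P * A = x • P →
      P * A⁻¹ = x⁻¹ • P := by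
    intro P x hx hPA
    have key : P = x • (P * A⁻¹) := by
      calc P = P * (A * A⁻¹) := by rw [hAAinv, Matrix.mul_one]
        _ = (P * A) * A⁻¹ := by rw [Matrix.mul_assoc]
        _ = x • (P * A⁻¹) := by rw [hPA, smul_mul_assoc]
    calc P * A⁻¹ = (x⁻¹ * x) • (P * A⁻¹) := by rw [inv_mul_cancel₀ hx, one_smul]
      _ = x⁻¹ • (x • (P * A⁻¹)) := by rw [smul_smul]
      _ = x⁻¹ • P := by rw [← key]
  have hPaAinv := hPinv Pa a ha0 hPaA
  have hPbAinv := hPinv Pb b hb0 hPbA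
  have hPcAinv := hPinv Pc c hc0 hPcA
  -- expansions of the projections
  have p2 : A * A = A ^ 2 := (sq A).symm
  have expPa : Pa = ra • A^2 - (ra*(b+c)) • A + (ra*(b*c)) • 1 := by
    rw [hPa]
    simp only [Matrix.mul_sub, Matrix.sub_mul, smul_mul_assoc, mul_smul_comm, one_mul,
      mul_one, smul_smul, p2]
    module
  have expPb : Pb = rb • A^2 - (rb*(a+c)) • A + (rb*(a*c)) • 1 := by
    rw [hPb]
    simp only [Matrix.mul_sub, Matrix.sub_mul, smul_mul_assoc, mul_smul_comm, one_mul,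
      mul_one, smul_smul, p2]
    module
  have expPc : Pc = rc • A^2 - (rc*(a+b)) • A + (rc*(a*b)) • 1 := by
    rw [hPc]
    simp only [Matrix.mul_sub, Matrix.sub_mul, smul_mul_assoc, mul_smul_comm, one_mul,
      mul_one, smul_smul, p2]
    module
  -- partition of unity
  have s1 : ra + rb + rc = 0 := by
    rw [hra, hrb, hrc]
    field_simp [hab', hac', hbc', hba', hca', hcb']
    ring
  have s2 : ra*(b+c) + rb*(a+c) + rc*(a+b) = 0 := by
    rw [hra, hrb, hrc]
    field_simp [hab', hac', hbc', hba', hca', hcb']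
    ring
  have s3 : ra*(b*c) + rb*(a*c) + rc*(a*b) = 1 := by
    rw [hra, hrb, hrc]
    field_simp [hab', hac', hbc', hba', hca', hcb']
    ring
  have hsum : Pa + Pb + Pc = 1 := by
    have hgoal : Pa + Pb + Pc = (ra + rb + rc) • A^2
        - (ra*(b+c) + rb*(a+c) + rc*(a+b)) • A
        + (ra*(b*c) + rb*(a*c) + rc*(a*b)) • 1 := by
      rw [expPa, expPb, expPc]
      module
    rw [hgoal, s1, s2, s3]
    simp
  clear_value ra rb rc Pa Pb Pc
  -- the integer-power formula
  have hzpow : ∀ n : ℤ, A ^ n = a^n • Pa + b^n • Pb + c^n • Pc := by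
    intro n
    induction n using Int.induction_on with
    | zero => simp only [zpow_zero, one_smul]; exact hsum.symm
    | succ m ih =>
        rw [Matrix.zpow_add_one hdetA, ih, Matrix.add_mul, Matrix.add_mul,
          smul_mul_assoc, smul_mul_assoc, smul_mul_assoc, hPaA, hPbA, hPcA,
          smul_smul, smul_smul, smul_smul]
        rw [zpow_add_one₀ ha0, zpow_add_one₀ hb0, zpow_add_one₀ hc0]
    | pred m ih =>
        rw [Matrix.zpow_sub_one hdetA, ih, Matrix.add_mul, Matrix.add_mul,
          smul_mul_assoc, smul_mul_assoc, smul_mul_assoc, hPaAinv, hPbAinv, hPcAinv,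
          smul_smul, smul_smul, smul_smul]
        rw [zpow_sub_one₀ ha0, zpow_sub_one₀ hb0, zpow_sub_one₀ hc0]
  -- traces of the projections
  have hA2inv : A^2 * A⁻¹ = A := by rw [sq, Matrix.mul_assoc, hAAinv, Matrix.mul_one]
  have hAsq : A^2 = A.trace • A - ((starRingEnd ℂ) A.trace) • 1 + A⁻¹ := by
    calc A^2 = A^3 * A⁻¹ := by
          rw [show A^3 = A^2 * A from pow_succ A 2, Matrix.mul_assoc, hAAinv, Matrix.mul_one]
      _ = (A.trace • A^2 - (starRingEnd ℂ) A.trace • A + 1) * A⁻¹ := by rw [hCH]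
      _ = A.trace • (A^2 * A⁻¹) - (starRingEnd ℂ) A.trace • (A * A⁻¹) + A⁻¹ := by
          rw [Matrix.add_mul, Matrix.sub_mul, smul_mul_assoc, smul_mul_assoc, Matrix.one_mul]
      _ = A.trace • A - ((starRingEnd ℂ) A.trace) • 1 + A⁻¹ := by rw [hA2inv, hAAinv]
  have htrAinv : A⁻¹.trace = (starRingEnd ℂ) A.trace := by
    rw [su21_inv hA, Matrix.trace_mul_cycle, Jmat_mul_Jmat, Matrix.one_mul,
      Matrix.trace_conjTranspose]
    rfl
  have htrA2 : (A^2).trace = A.trace^2 - 2*((starRingEnd ℂ) A.trace) := by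
    rw [hAsq, Matrix.trace_add, Matrix.trace_sub, Matrix.trace_smul, Matrix.trace_smul,
      htrAinv, Matrix.trace_one]
    simp [smul_eq_mul]
    ring
  have htrace_formula : ∀ r s u : ℂ, (r • A^2 - s • A + u • 1).trace
      = r * (A.trace^2 - 2*((starRingEnd ℂ) A.trace)) - s * A.trace + u * 3 := by
    intro r s u
    rw [Matrix.trace_add, Matrix.trace_sub, Matrix.trace_smul, Matrix.trace_smul,
      Matrix.trace_smul, htrA2, Matrix.trace_one]
    simp [smul_eq_mul]
  have htrPa : Pa.trace = 1 := by
    rw [expPa, htrace_formula, ← e2, ← e1, hra]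
    linear_combination inv_mul_cancel₀ (mul_ne_zero hab' hac')
  have htrPb : Pb.trace = 1 := by
    rw [expPb, htrace_formula, ← e2, ← e1, hrb]
    linear_combination inv_mul_cancel₀ (mul_ne_zero hba' hbc')
  have htrPc : Pc.trace = 1 := by
    rw [expPc, htrace_formula, ← e2, ← e1, hrc]
    linear_combination inv_mul_cancel₀ (mul_ne_zero hca' hcb')
  have hPane : Pa ≠ 0 := by
    intro h; rw [h] at htrPa; simp at htrPa
  have hPbne : Pb ≠ 0 := by
    intro h; rw [h] at htrPb; simp at htrPb
  have hPcne : Pc ≠ 0 := by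
    intro h; rw [h] at htrPc; simp at htrPc
  -- eigenvectors
  have eigvec : ∀ (P : Matrix (Fin 3) (Fin 3) ℂ) (x : ℂ), A * P = x • P → P ≠ 0 →
      ∃ v : Fin 3 → ℂ, v ≠ 0 ∧ A.mulVec v = x • v := by
    intro P x hAP hP
    have : ∃ i j, P i j ≠ 0 := by
      by_contra hcon
      push_neg at hcon
      exact hP (by ext i j; simpa using hcon i j)
    obtain ⟨i0, j0, hij⟩ := this
    refine ⟨fun i => P i j0, fun h => hij (congrFun h i0), ?_⟩
    funext i
    have := congrArg (fun M => M i j0) hAP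
    simpa [Matrix.mul_apply, Matrix.mulVec, dotProduct] using this
  obtain ⟨v1, hv1ne, hv1⟩ := eigvec Pa a hAPa hPane
  obtain ⟨v2, hv2ne, hv2⟩ := eigvec Pb b hAPb hPbne
  obtain ⟨v3, hv3ne, hv3⟩ := eigvec Pc c hAPc hPcne
  -- the change of basis matrix
  set d : Fin 3 → ℂ := ![a, b, c] with hd
  set Q : Matrix (Fin 3) (Fin 3) ℂ := Matrix.of (fun i j => ![v1, v2, v3] j i) with hQ
  have hQmulVec : ∀ y : Fin 3 → ℂ, Q.mulVec y = y 0 • v1 + y 1 • v2 + y 2 • v3 := by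
    intro y
    funext i
    simp [hQ, Matrix.mulVec, dotProduct, Fin.sum_univ_three]
    ring
  have hmv_lin : ∀ (M : Matrix (Fin 3) (Fin 3) ℂ) (x : ℂ) (v : Fin 3 → ℂ),
      M.mulVec (x • v) = x • M.mulVec v := fun M x v => Matrix.mulVec_smul M x v
  have hfac : ∀ (x : ℂ) (w : Fin 3 → ℂ) (lam : ℂ), A.mulVec w = lam • w →
      (A - x•1).mulVec w = (lam - x) • w := by
    intro x w lam hw
    rw [Matrix.sub_mulVec, hw, Matrix.smul_mulVec, Matrix.one_mulVec, sub_smul]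
  have hquad : ∀ (x y : ℂ) (w : Fin 3 → ℂ) (lam : ℂ), A.mulVec w = lam • w →
      ((A - x•1) * (A - y•1)).mulVec w = ((lam - x) * (lam - y)) • w := by
    intro x y w lam hw
    rw [← Matrix.mulVec_mulVec, hfac y w lam hw, hmv_lin, hfac x w lam hw, smul_smul,
      mul_comm]
  have hkernel : ∀ y : Fin 3 → ℂ, Q.mulVec y = 0 → y = 0 := by
    intro y hy
    have key : ∀ (x z : ℂ) (j : Fin 3) (w : Fin 3 → ℂ) (lam : ℂ), A.mulVec w = lam • w →
        True := fun _ _ _ _ _ _ => trivial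
    -- apply (A-b)(A-c) to kill v2, v3
    have h1 : y 0 • (((a-b)*(a-c)) • v1) = 0 := by
      have h : ((A - b•1) * (A - c•1)).mulVec (Q.mulVec y)
          = ((A - b•1) * (A - c•1)).mulVec 0 := by rw [hy]
      rw [hQmulVec, Matrix.mulVec_zero] at h
      simp only [Matrix.mulVec_add, hmv_lin] at h
      rw [hquad b c v1 a hv1, hquad b c v2 b hv2, hquad b c v3 c hv3] at h
      simpa [sub_self, zero_mul, mul_zero, zero_smul, smul_zero, add_zero, zero_add] using h
    have h2 : y 1 • (((b-a)*(b-c)) • v2) = 0 := by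
      have h : ((A - a•1) * (A - c•1)).mulVec (Q.mulVec y)
          = ((A - a•1) * (A - c•1)).mulVec 0 := by rw [hy]
      rw [hQmulVec, Matrix.mulVec_zero] at h
      simp only [Matrix.mulVec_add, hmv_lin] at h
      rw [hquad a c v1 a hv1, hquad a c v2 b hv2, hquad a c v3 c hv3] at h
      simpa [sub_self, zero_mul, mul_zero, zero_smul, smul_zero, add_zero, zero_add] using h
    have h3 : y 2 • (((c-a)*(c-b)) • v3) = 0 := by
      have h : ((A - a•1) * (A - b•1)).mulVec (Q.mulVec y)
          = ((A - a•1) * (A - b•1)).mulVec 0 := by rw [hy]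
      rw [hQmulVec, Matrix.mulVec_zero] at h
      simp only [Matrix.mulVec_add, hmv_lin] at h
      rw [hquad a b v1 a hv1, hquad a b v2 b hv2, hquad a b v3 c hv3] at h
      simpa [sub_self, zero_mul, mul_zero, zero_smul, smul_zero, add_zero, zero_add] using h
    have hy0 : y 0 = 0 := by
      rcases smul_eq_zero.mp h1 with h | h
      · exact h
      · rcases smul_eq_zero.mp h with h' | h'
        · exact absurd h' (mul_ne_zero hab' hac')
        · exact absurd h' hv1ne
    have hy1 : y 1 = 0 := by
      rcases smul_eq_zero.mp h2 with h | h
      · exact h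
      · rcases smul_eq_zero.mp h with h' | h'
        · exact absurd h' (mul_ne_zero hba' hbc')
        · exact absurd h' hv2ne
    have hy2 : y 2 = 0 := by
      rcases smul_eq_zero.mp h3 with h | h
      · exact h
      · rcases smul_eq_zero.mp h with h' | h'
        · exact absurd h' (mul_ne_zero hca' hcb')
        · exact absurd h' hv3ne
    funext i
    fin_cases i
    · exact hy0
    · exact hy1
    · exact hy2
  have hdetQ : IsUnit Q.det := by
    rw [isUnit_iff_ne_zero]
    intro hdet
    obtain ⟨v, hvne, hv⟩ := (Matrix.exists_mulVec_eq_zero_iff).mpr hdet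
    exact hvne (hkernel v hv)
  have hQQ : Q * Q⁻¹ = 1 := Matrix.mul_nonsing_inv Q hdetQ
  have hQ'Q : Q⁻¹ * Q = 1 := Matrix.nonsing_inv_mul Q hdetQ
  -- A is diagonalized by Q
  have hAQ : A * Q = Q * Matrix.diagonal d := by
    ext i j
    have hcol : (A * Q) i j = (A.mulVec (![v1, v2, v3] j)) i := by
      simp [hQ, Matrix.mul_apply, Matrix.mulVec, dotProduct]
    rw [hcol, Matrix.mul_diagonal]
    fin_cases j
    · show (A.mulVec v1) i = Q i 0 * d 0
      rw [hv1]; simp [hd, hQ, mul_comm]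
    · show (A.mulVec v2) i = Q i 1 * d 1
      rw [hv2]; simp [hd, hQ, mul_comm]
    · show (A.mulVec v3) i = Q i 2 * d 2
      rw [hv3]; simp [hd, hQ, mul_comm]
  have hdiagA : Q⁻¹ * A * Q = Matrix.diagonal d := by
    rw [Matrix.mul_assoc, hAQ, ← Matrix.mul_assoc, hQ'Q, Matrix.one_mul]
  -- the conjugated Hermitian form
  set H : Matrix (Fin 3) (Fin 3) ℂ := Qᴴ * Jmat * Q with hH
  set B' : Matrix (Fin 3) (Fin 3) ℂ := Q⁻¹ * B * Q with hB'
  have hQinvH : (Q⁻¹)ᴴ * Qᴴ = 1 := by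
    rw [← Matrix.conjTranspose_mul, hQQ, Matrix.conjTranspose_one]
  have hinvar : ∀ M : Matrix (Fin 3) (Fin 3) ℂ, Mᴴ * Jmat * M = Jmat →
      (Q⁻¹ * M * Q)ᴴ * H * (Q⁻¹ * M * Q) = H := by
    intro M hM
    calc (Q⁻¹ * M * Q)ᴴ * (Qᴴ * Jmat * Q) * (Q⁻¹ * M * Q)
        = Qᴴ * (Mᴴ * (((Q⁻¹)ᴴ * Qᴴ) * (Jmat * ((Q * Q⁻¹) * (M * Q))))) := by
          simp only [Matrix.conjTranspose_mul, Matrix.mul_assoc]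
      _ = Qᴴ * (Mᴴ * (Jmat * (M * Q))) := by rw [hQinvH, hQQ, Matrix.one_mul, Matrix.one_mul]
      _ = Qᴴ * Jmat * Q := by
          rw [← Matrix.mul_assoc Jmat M Q, ← Matrix.mul_assoc Mᴴ (Jmat * M) Q,
            ← Matrix.mul_assoc Mᴴ Jmat M, hM]
          rw [Matrix.mul_assoc]
  have hDinvar : (Matrix.diagonal d)ᴴ * H * (Matrix.diagonal d) = H := by
    rw [← hdiagA]
    exact hinvar A hA.2
  have hBinvar : B'ᴴ * H * B' = H := hinvar B hB.2
  -- entries of H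
  have hent : ∀ i j, (starRingEnd ℂ) (d i) * H i j * d j = H i j := by
    intro i j
    have := congrArg (fun M => M i j) hDinvar
    simpa [Matrix.diagonal_conjTranspose, Matrix.diagonal_mul, Matrix.mul_diagonal,
      mul_comm, mul_left_comm, mul_assoc] using this
  have hkill : ∀ i j, Complex.abs (d i) * Complex.abs (d j) ≠ 1 → H i j = 0 := by
    intro i j hne
    have h := hent i j
    by_contra h0
    apply hne
    have h1 : ((starRingEnd ℂ) (d i) * d j - 1) * H i j = 0 := by ring_nf; linear_combination h
    rcases mul_eq_zero.mp h1 with h2 | h2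
    · have h3 : (starRingEnd ℂ) (d i) * d j = 1 := by linear_combination h2
      have := congrArg Complex.abs h3
      rwa [_root_.map_mul, _root_.map_one, Complex.abs_conj] at this
    · exact absurd h2 h0
  have labs : Complex.abs a * Complex.abs a ≠ 1 := by nlinarith
  have hH00 : H 0 0 = 0 := hkill 0 0 (by simpa [hd] using labs)
  have hH01 : H 0 1 = 0 := hkill 0 1 (by simp [hd, hb1]; intro h; rw [h] at ha1; linarith)
  have hH10 : H 1 0 = 0 := hkill 1 0 (by simp [hd, hb1]; intro h; rw [h] at ha1; linarith)
  have hH12 : H 1 2 = 0 := hkill 1 2 (by simp [hd, hb1]; intro h; rw [h] at hc_lt; linarith)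
  have hH21 : H 2 1 = 0 := hkill 2 1 (by simp [hd, hb1]; intro h; rw [h] at hc_lt; linarith)
  have hH22 : H 2 2 = 0 := hkill 2 2 (by simp [hd]; nlinarith)
  -- nondegeneracy
  have hdetH : H.det ≠ 0 := by
    rw [hH, Matrix.det_mul, Matrix.det_mul, Matrix.det_conjTranspose]
    have hdJ : Jmat.det = -1 := by
      simp [Jmat, Matrix.det_diagonal, Fin.prod_univ_three]
    rw [hdJ]
    have hq : Q.det ≠ 0 := by
      intro h
      rw [h] at hdetQ
      simp at hdetQ
    simp only [star_ne_zero, mul_ne_zero_iff]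
    refine ⟨⟨?_, ?_⟩, hq⟩
    · simpa using hq
    · norm_num
  have hdetH' : H.det = -(H 0 2 * H 1 1 * H 2 0) := by
    rw [Matrix.det_fin_three, hH00, hH01, hH10, hH12, hH21, hH22]
    ring
  have hH02 : H 0 2 ≠ 0 := by
    intro h; rw [hdetH', h] at hdetH; simp at hdetH
  have hH11 : H 1 1 ≠ 0 := by
    intro h; rw [hdetH', h] at hdetH; simp at hdetH
  have hH20 : H 2 0 ≠ 0 := by
    intro h; rw [hdetH', h] at hdetH; simp at hdetH
  -- conjugation of the projections
  have hconj_mul : ∀ X Y : Matrix (Fin 3) (Fin 3) ℂ,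
      Q⁻¹*(X*Y)*Q = (Q⁻¹*X*Q)*(Q⁻¹*Y*Q) := by
    intro X Y
    rw [show (Q⁻¹*X*Q)*(Q⁻¹*Y*Q) = Q⁻¹*(X*((Q*Q⁻¹)*Y))*Q by
      simp only [Matrix.mul_assoc]]
    rw [hQQ, Matrix.one_mul]
  have hdiag_sub : ∀ x : ℂ, Q⁻¹*(A - x•1)*Q = Matrix.diagonal d - x•1 := by
    intro x
    calc Q⁻¹*(A - x•1)*Q = Q⁻¹*A*Q - x • (Q⁻¹*Q) := by
          rw [Matrix.mul_sub, mul_smul_comm, Matrix.mul_one, Matrix.sub_mul, smul_mul_assoc]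
      _ = Matrix.diagonal d - x•1 := by rw [hdiagA, hQ'Q]
  have hEdiag : ∀ (x y : ℂ) (r : ℂ),
      r • ((Matrix.diagonal d - x•1) * (Matrix.diagonal d - y•1))
        = Matrix.diagonal (fun i => r * ((d i - x) * (d i - y))) := by
    intro x y r
    ext i j
    fin_cases i <;> fin_cases j <;>
      simp [Matrix.mul_apply, Fin.sum_univ_three, Matrix.diagonal, Matrix.one_apply,
        Matrix.sub_apply, Matrix.smul_apply, smul_eq_mul] <;> ring
  have hconjP : ∀ (r x y : ℂ), Q⁻¹*(r • ((A - x•1) * (A - y•1)))*Q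
      = Matrix.diagonal (fun i => r * ((d i - x) * (d i - y))) := by
    intro r x y
    rw [mul_smul_comm, smul_mul_assoc, hconj_mul, hdiag_sub, hdiag_sub, hEdiag]
  have hPaconj : Q⁻¹ * Pa * Q = Matrix.diagonal ![1,0,0] := by
    rw [hPa, hconjP]
    have hfun : (fun i => ra * ((d i - b) * (d i - c))) = ![1,0,0] := by
      funext i
      fin_cases i
      · show ra * ((d 0 - b) * (d 0 - c)) = 1
        rw [hra]
        show ((a-b)*(a-c))⁻¹ * ((![a,b,c] 0 - b) * (![a,b,c] 0 - c)) = 1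
        exact inv_mul_cancel₀ (mul_ne_zero hab' hac')
      · show ra * ((d 1 - b) * (d 1 - c)) = 0
        simp [hd]
      · show ra * ((d 2 - b) * (d 2 - c)) = 0
        simp [hd]
    rw [hfun]
  have hPbconj : Q⁻¹ * Pb * Q = Matrix.diagonal ![0,1,0] := by
    rw [hPb, hconjP]
    have hfun : (fun i => rb * ((d i - a) * (d i - c))) = ![0,1,0] := by
      funext i
      fin_cases i
      · show rb * ((d 0 - a) * (d 0 - c)) = 0
        simp [hd]
      · show rb * ((d 1 - a) * (d 1 - c)) = 1
        rw [hrb]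
        show ((b-a)*(b-c))⁻¹ * ((![a,b,c] 1 - a) * (![a,b,c] 1 - c)) = 1
        exact inv_mul_cancel₀ (mul_ne_zero hba' hbc')
      · show rb * ((d 2 - a) * (d 2 - c)) = 0
        simp [hd]
    rw [hfun]
  have hPcconj : Q⁻¹ * Pc * Q = Matrix.diagonal ![0,0,1] := by
    rw [hPc, hconjP]
    have hfun : (fun i => rc * ((d i - a) * (d i - b))) = ![0,0,1] := by
      funext i
      fin_cases i
      · show rc * ((d 0 - a) * (d 0 - b)) = 0
        simp [hd]
      · show rc * ((d 1 - a) * (d 1 - b)) = 0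
        simp [hd]
      · show rc * ((d 2 - a) * (d 2 - b)) = 1
        rw [hrc]
        show ((c-a)*(c-b))⁻¹ * ((![a,b,c] 2 - a) * (![a,b,c] 2 - b)) = 1
        exact inv_mul_cancel₀ (mul_ne_zero hca' hcb')
    rw [hfun]
  -- traces as diagonal entries of B'
  have htrace_link : ∀ (P : Matrix (Fin 3) (Fin 3) ℂ) (E : Matrix (Fin 3) (Fin 3) ℂ),
      Q⁻¹ * P * Q = E → (P * B).trace = (E * B').trace := by
    intro P E hPE
    have hPQ : P = Q * E * Q⁻¹ := by
      rw [← hPE]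
      rw [show Q * (Q⁻¹*P*Q) * Q⁻¹ = (Q*Q⁻¹)*P*(Q*Q⁻¹) by simp only [Matrix.mul_assoc]]
      rw [hQQ, Matrix.one_mul, Matrix.mul_one]
    rw [hPQ, hB']
    calc (Q * E * Q⁻¹ * B).trace = ((Q * E) * (Q⁻¹ * B)).trace := by
          simp only [Matrix.mul_assoc]
      _ = ((Q⁻¹ * B) * (Q * E)).trace := Matrix.trace_mul_comm _ _
      _ = (E * (Q⁻¹ * B * Q)).trace := by
          rw [show (Q⁻¹ * B) * (Q * E) = (Q⁻¹ * B * Q) * E by simp only [Matrix.mul_assoc]]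
          exact Matrix.trace_mul_comm _ _
  have hαB : (Pa * B).trace = B' 0 0 := by
    rw [htrace_link Pa _ hPaconj]
    simp [Matrix.trace_fin_three, Matrix.mul_apply, Fin.sum_univ_three]
  have hβB : (Pb * B).trace = B' 1 1 := by
    rw [htrace_link Pb _ hPbconj]
    simp [Matrix.trace_fin_three, Matrix.mul_apply, Fin.sum_univ_three]
  have hγB : (Pc * B).trace = B' 2 2 := by
    rw [htrace_link Pc _ hPcconj]
    simp [Matrix.trace_fin_three, Matrix.mul_apply, Fin.sum_univ_three]
  -- entries of the invariance equation for B'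
  have hBent : ∀ i j : Fin 3,
      (starRingEnd ℂ) (B' 0 i) * H 0 2 * B' 2 j + (starRingEnd ℂ) (B' 1 i) * H 1 1 * B' 1 j
        + (starRingEnd ℂ) (B' 2 i) * H 2 0 * B' 0 j = H i j := by
    intro i j
    have h := congrArg (fun M => M i j) hBinvar
    simp only [Matrix.mul_apply, Matrix.conjTranspose_apply, Fin.sum_univ_three,
      RCLike.star_def] at h
    rw [hH00, hH01, hH10, hH12, hH21, hH22] at h
    linear_combination h
  have hzz : ∀ z : ℂ, (starRingEnd ℂ) z * z = 0 → z = 0 := by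
    intro z h
    rw [mul_comm, Complex.mul_conj] at h
    exact Complex.normSq_eq_zero.mp (by exact_mod_cast h)
  have hzz1 : ∀ z : ℂ, (starRingEnd ℂ) z * z = 1 → Complex.abs z = 1 := by
    intro z h
    rw [mul_comm, Complex.mul_conj] at h
    have h2 : Complex.normSq z = 1 := by exact_mod_cast h
    have h3 : Complex.abs z ^ 2 = 1 := by rw [Complex.sq_abs]; exact h2
    nlinarith [Complex.abs.nonneg z]
  -- the two degenerate cases
  have case_alpha : B' 0 0 = 0 → Complex.abs (B' 1 1) = 1 := by
    intro h0
    have hstar0 : (starRingEnd ℂ) (B' 0 0) = 0 := by rw [h0]; simp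
    have hB10 : B' 1 0 = 0 := by
      have key : H 1 1 * ((starRingEnd ℂ) (B' 1 0) * B' 1 0) = 0 := by
        linear_combination hBent 0 0 - (H 0 2 * B' 2 0) * hstar0
          - ((starRingEnd ℂ) (B' 2 0) * H 2 0) * h0 + hH00
      rcases mul_eq_zero.mp key with h | h
      · exact absurd h hH11
      · exact hzz _ h
    have hstar10 : (starRingEnd ℂ) (B' 1 0) = 0 := by rw [hB10]; simp
    have hB20 : (starRingEnd ℂ) (B' 2 0) ≠ 0 := by
      intro hz
      have key : H 0 2 = 0 := by
        linear_combination - hBent 0 2 + (H 0 2 * B' 2 2) * hstar0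
          + (H 1 1 * B' 1 2) * hstar10 + (H 2 0 * B' 0 2) * hz
      exact hH02 key
    have hB01 : B' 0 1 = 0 := by
      have key : (starRingEnd ℂ) (B' 2 0) * (H 2 0 * B' 0 1) = 0 := by
        linear_combination hBent 0 1 - (H 0 2 * B' 2 1) * hstar0
          - (H 1 1 * B' 1 1) * hstar10 + hH01
      rcases mul_eq_zero.mp key with h | h
      · exact absurd h hB20
      · rcases mul_eq_zero.mp h with h' | h'
        · exact absurd h' hH20
        · exact h'
    have hstar01 : (starRingEnd ℂ) (B' 0 1) = 0 := by rw [hB01]; simp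
    have key11 : (starRingEnd ℂ) (B' 1 1) * B' 1 1 = 1 := by
      have key : H 1 1 * ((starRingEnd ℂ) (B' 1 1) * B' 1 1) = H 1 1 * 1 := by
        linear_combination hBent 1 1 - (H 0 2 * B' 2 1) * hstar01
          - ((starRingEnd ℂ) (B' 2 1) * H 2 0) * hB01
      exact mul_left_cancel₀ hH11 key
    exact hzz1 _ key11
  have case_gamma : B' 2 2 = 0 → Complex.abs (B' 1 1) = 1 := by
    intro h0
    have hstar2 : (starRingEnd ℂ) (B' 2 2) = 0 := by rw [h0]; simp
    have hB12 : B' 1 2 = 0 := by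
      have key : H 1 1 * ((starRingEnd ℂ) (B' 1 2) * B' 1 2) = 0 := by
        linear_combination hBent 2 2 - ((starRingEnd ℂ) (B' 0 2) * H 0 2) * h0
          - (H 2 0 * B' 0 2) * hstar2 + hH22
      rcases mul_eq_zero.mp key with h | h
      · exact absurd h hH11
      · exact hzz _ h
    have hstar12 : (starRingEnd ℂ) (B' 1 2) = 0 := by rw [hB12]; simp
    have hB02 : (starRingEnd ℂ) (B' 0 2) ≠ 0 := by
      intro hz
      have key : H 2 0 = 0 := by
        linear_combination - hBent 2 0 + (H 0 2 * B' 2 0) * hz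
          + (H 1 1 * B' 1 0) * hstar12 + (H 2 0 * B' 0 0) * hstar2
      exact hH20 key
    have hB21 : B' 2 1 = 0 := by
      have key : (starRingEnd ℂ) (B' 0 2) * (H 0 2 * B' 2 1) = 0 := by
        linear_combination hBent 2 1 - (H 1 1 * B' 1 1) * hstar12
          - (H 2 0 * B' 0 1) * hstar2 + hH21
      rcases mul_eq_zero.mp key with h | h
      · exact absurd h hB02
      · rcases mul_eq_zero.mp h with h' | h'
        · exact absurd h' hH02
        · exact h'
    have hstar21 : (starRingEnd ℂ) (B' 2 1) = 0 := by rw [hB21]; simp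
    have key11 : (starRingEnd ℂ) (B' 1 1) * B' 1 1 = 1 := by
      have key : H 1 1 * ((starRingEnd ℂ) (B' 1 1) * B' 1 1) = H 1 1 * 1 := by
        linear_combination hBent 1 1 - ((starRingEnd ℂ) (B' 0 1) * H 0 2) * hB21
          - (H 2 0 * B' 0 1) * hstar21
      exact mul_left_cancel₀ hH11 key
    exact hzz1 _ key11
  refine ⟨(Pa * B).trace, (Pb * B).trace, (Pc * B).trace, ?_, ?_, ?_⟩
  · intro n
    rw [hzpow n, Matrix.add_mul, Matrix.add_mul, smul_mul_assoc, smul_mul_assoc,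
      smul_mul_assoc, Matrix.trace_add, Matrix.trace_add, Matrix.trace_smul,
      Matrix.trace_smul, Matrix.trace_smul]
    simp [smul_eq_mul]
  · intro h0
    rw [hαB] at h0
    rw [hβB]
    exact case_alpha h0
  · intro h0
    rw [hγB] at h0
    rw [hβB]
    exact case_gamma h0

lemma tri_lower (x y z : ℂ) :
    Complex.abs x - Complex.abs y - Complex.abs z ≤ Complex.abs (x + y + z) := by
  have h1 : Complex.abs x ≤ Complex.abs (x + y + z) + Complex.abs (y + z) := by
    calc Complex.abs x = Complex.abs ((x + y + z) + (-(y + z))) := by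
          exact congrArg Complex.abs (by ring)
      _ ≤ Complex.abs (x + y + z) + Complex.abs (-(y + z)) := Complex.abs.add_le _ _
      _ = Complex.abs (x + y + z) + Complex.abs (y + z) := by rw [Complex.abs.map_neg]
  have h2 : Complex.abs (y + z) ≤ Complex.abs y + Complex.abs z := Complex.abs.add_le _ _
  linarith

lemma tri_upper (x y z : ℂ) :
    Complex.abs (x + y + z) ≤ Complex.abs x + Complex.abs y + Complex.abs z := by
  have h1 := Complex.abs.add_le (x + y) z
  have h2 := Complex.abs.add_le x y
  linarith

theorem bounded_neighbors (c : ℂ) :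
    ∃ D : ℝ, 0 < D ∧
      ∀ A B : Matrix (Fin 3) (Fin 3) ℂ, IsSU21 A → IsSU21 B →
        (A * B * A⁻¹ * B⁻¹).trace = c → 0 < fdisc A.trace →
        (¬ ∃ (k a : ℝ) (N : ℕ), 0 < k ∧ 1 < a ∧
            ∀ n : ℤ, (N : ℤ) ≤ |n| →
              k * a ^ n.natAbs ≤ ‖(A ^ n * B).trace‖) →
        {n : ℤ | ‖(A ^ n * B).trace‖ < D}.Infinite := by
  refine ⟨2, by norm_num, ?_⟩
  intro A B hA hB hcomm hf hK
  simp only [← Complex.abs_apply] at hK ⊢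
  obtain ⟨a, b, c', e1, e2, e3, ha1, hb1, hc1⟩ := roots_structure A.trace hf
  obtain ⟨α, β, γ, hu, hαlem, hγlem⟩ := key_lemma A B hA hB a b c' e1 e2 e3 ha1 hb1 hc1
  set l := Complex.abs a with hl
  have hl0 : (0:ℝ) < l := lt_trans one_pos ha1
  have habs_pos : ∀ (n : ℕ), (0:ℝ) < l ^ n := fun n => pow_pos hl0 n
  -- |a^n|, |b^n|, |c^n| for n = m and n = -m
  have habm : ∀ m : ℕ, Complex.abs (a ^ (m:ℤ)) = l ^ m := by
    intro m; rw [zpow_natCast, _root_.map_pow]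
  have habmneg : ∀ m : ℕ, Complex.abs (a ^ (-(m:ℤ))) = (l ^ m)⁻¹ := by
    intro m; rw [_root_.zpow_neg, _root_.map_inv₀, zpow_natCast, _root_.map_pow]
  have hbbm : ∀ n : ℤ, Complex.abs (b ^ n) = 1 := by
    intro n
    rw [_root_.map_zpow₀, hb1, _root_.one_zpow]
  have hcbm : ∀ m : ℕ, Complex.abs (c' ^ (m:ℤ)) = (l ^ m)⁻¹ := by
    intro m; rw [zpow_natCast, _root_.map_pow, hc1, inv_pow]
  have hcbmneg : ∀ m : ℕ, Complex.abs (c' ^ (-(m:ℤ))) = l ^ m := by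
    intro m; rw [_root_.zpow_neg, _root_.map_inv₀, zpow_natCast, _root_.map_pow, hc1, inv_pow, inv_inv]
  by_cases hαz : α = 0
  · -- forward bounded case
    have hβ1 := hαlem hαz
    obtain ⟨N₀, hN₀⟩ := pow_unbounded_of_one_lt (Complex.abs γ) ha1
    apply Set.infinite_of_injective_forall_mem
      (f := fun m : ℕ => ((N₀ + m : ℕ) : ℤ))
    · intro x y hxy
      simpa using hxy
    · intro m
      simp only [Set.mem_setOf_eq]
      rw [hu, hαz, mul_zero, zero_add]
      have hle : Complex.abs (b ^ ((N₀ + m : ℕ) : ℤ) * β + c' ^ ((N₀ + m : ℕ) : ℤ) * γ)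
          ≤ 1 + (l ^ (N₀ + m))⁻¹ * Complex.abs γ := by
        have := tri_upper (b ^ ((N₀ + m : ℕ) : ℤ) * β) (c' ^ ((N₀ + m : ℕ) : ℤ) * γ) 0
        simp only [map_zero, add_zero] at this
        refine le_trans this ?_
        rw [_root_.map_mul, _root_.map_mul, hbbm, hβ1, one_mul, hcbm]
      have hsmall : (l ^ (N₀ + m))⁻¹ * Complex.abs γ < 1 := by
        have hmono : l ^ N₀ ≤ l ^ (N₀ + m) := pow_le_pow_right₀ (le_of_lt ha1) (by omega)
        rw [inv_mul_lt_iff₀ (habs_pos _), mul_one]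
        linarith
      calc Complex.abs (b ^ ((N₀ + m : ℕ) : ℤ) * β + c' ^ ((N₀ + m : ℕ) : ℤ) * γ)
          ≤ 1 + (l ^ (N₀ + m))⁻¹ * Complex.abs γ := hle
        _ < 2 := by linarith
  · by_cases hγz : γ = 0
    · -- backward bounded case
      have hβ1 := hγlem hγz
      obtain ⟨N₀, hN₀⟩ := pow_unbounded_of_one_lt (Complex.abs α) ha1
      apply Set.infinite_of_injective_forall_mem
        (f := fun m : ℕ => -((N₀ + m : ℕ) : ℤ))
      · intro x y hxy
        simpa using hxy
      · intro m
        simp only [Set.mem_setOf_eq]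
        rw [hu, hγz, mul_zero, add_zero]
        have hle : Complex.abs (a ^ (-((N₀ + m : ℕ) : ℤ)) * α + b ^ (-((N₀ + m : ℕ) : ℤ)) * β)
            ≤ (l ^ (N₀ + m))⁻¹ * Complex.abs α + 1 := by
          have := tri_upper (a ^ (-((N₀ + m : ℕ) : ℤ)) * α) (b ^ (-((N₀ + m : ℕ) : ℤ)) * β) 0
          simp only [map_zero, add_zero] at this
          refine le_trans this ?_
          rw [_root_.map_mul, _root_.map_mul, hbbm, hβ1, one_mul, habmneg]
        have hsmall : (l ^ (N₀ + m))⁻¹ * Complex.abs α < 1 := by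
          have hmono : l ^ N₀ ≤ l ^ (N₀ + m) := pow_le_pow_right₀ (le_of_lt ha1) (by omega)
          rw [inv_mul_lt_iff₀ (habs_pos _), mul_one]
          linarith
        calc Complex.abs (a ^ (-((N₀ + m : ℕ) : ℤ)) * α + b ^ (-((N₀ + m : ℕ) : ℤ)) * β)
            ≤ (l ^ (N₀ + m))⁻¹ * Complex.abs α + 1 := hle
          _ < 2 := by linarith
    · -- growth case: contradiction with hK
      exfalso
      apply hK
      have hαpos : 0 < Complex.abs α := by
        simpa [Complex.abs.pos_iff] using hαz
      have hγpos : 0 < Complex.abs γ := by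
        simpa [Complex.abs.pos_iff] using hγz
      set k0 : ℝ := min (Complex.abs α) (Complex.abs γ) / 2 with hk0
      have hk0pos : 0 < k0 := by
        rw [hk0]
        have := lt_min hαpos hγpos
        positivity
      set C : ℝ := Complex.abs α + Complex.abs β + Complex.abs γ with hC
      obtain ⟨N, hN⟩ := pow_unbounded_of_one_lt (C / k0) ha1
      refine ⟨k0, l, N, hk0pos, ha1, ?_⟩
      intro n hn
      have hCk : C < k0 * l ^ N := by
        rw [div_lt_iff₀ hk0pos] at hN
        nlinarith
      rw [Int.abs_eq_natAbs] at hn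
      have hmono : l ^ N ≤ l ^ n.natAbs := by
        apply pow_le_pow_right₀ (le_of_lt ha1)
        omega
      have hk0α : k0 ≤ Complex.abs α / 2 := by
        rw [hk0]
        have := min_le_left (Complex.abs α) (Complex.abs γ)
        linarith
      have hk0γ : k0 ≤ Complex.abs γ / 2 := by
        rw [hk0]
        have := min_le_right (Complex.abs α) (Complex.abs γ)
        linarith
      rw [hu]
      rcases le_or_gt 0 n with hn0 | hn0
      · -- positive side
        obtain ⟨m, rfl⟩ : ∃ m : ℕ, n = (m : ℤ) := ⟨n.toNat, (Int.toNat_of_nonneg hn0).symm⟩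
        have hmabs : ((m:ℤ)).natAbs = m := Int.natAbs_natCast m
        rw [hmabs] at hmono ⊢
        have hlow := tri_lower (a ^ ((m:ℕ):ℤ) * α) (b ^ ((m:ℕ):ℤ) * β) (c' ^ ((m:ℕ):ℤ) * γ)
        rw [_root_.map_mul, _root_.map_mul, _root_.map_mul, habm, hbbm, hcbm] at hlow
        have hcsmall : (l ^ m)⁻¹ * Complex.abs γ ≤ Complex.abs γ := by
          rw [inv_mul_le_iff₀ (habs_pos _)]
          have h1m : (1:ℝ) ≤ l ^ m := by
            simpa using pow_le_pow_right₀ (le_of_lt ha1) (Nat.zero_le m)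
          nlinarith
        have hbig : k0 * l ^ m ≤ l ^ m * Complex.abs α - 1 * Complex.abs β
            - (l ^ m)⁻¹ * Complex.abs γ := by
          have hstep : k0 ≤ Complex.abs α - k0 := by linarith
          have h1 : k0 * l ^ N ≤ (Complex.abs α - k0) * l ^ m :=
            calc k0 * l ^ N ≤ k0 * l ^ m :=
                  mul_le_mul_of_nonneg_left hmono hk0pos.le
              _ ≤ (Complex.abs α - k0) * l ^ m :=
                  mul_le_mul_of_nonneg_right hstep (habs_pos m).le
          have hC' : Complex.abs β + (l ^ m)⁻¹ * Complex.abs γ ≤ C := by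
            rw [hC]
            have := Complex.abs.nonneg α
            linarith
          nlinarith
        linarith
      · -- negative side
        obtain ⟨m, rfl⟩ : ∃ m : ℕ, n = -(m : ℤ) := by
          refine ⟨n.natAbs, ?_⟩
          omega
        have hmabs : (-(m:ℤ)).natAbs = m := by simp
        rw [hmabs] at hmono ⊢
        have hlow := tri_lower (c' ^ (-(m:ℕ):ℤ) * γ) (b ^ (-(m:ℕ):ℤ) * β) (a ^ (-(m:ℕ):ℤ) * α)
        rw [_root_.map_mul, _root_.map_mul, _root_.map_mul, habmneg, hbbm, hcbmneg] at hlow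
        have hrw : a ^ (-(m:ℕ):ℤ) * α + b ^ (-(m:ℕ):ℤ) * β + c' ^ (-(m:ℕ):ℤ) * γ
            = c' ^ (-(m:ℕ):ℤ) * γ + b ^ (-(m:ℕ):ℤ) * β + a ^ (-(m:ℕ):ℤ) * α := by ring
        rw [hrw]
        have hasmall : (l ^ m)⁻¹ * Complex.abs α ≤ Complex.abs α := by
          rw [inv_mul_le_iff₀ (habs_pos _)]
          have h1m : (1:ℝ) ≤ l ^ m := by
            simpa using pow_le_pow_right₀ (le_of_lt ha1) (Nat.zero_le m)
          nlinarith
        have hbig : k0 * l ^ m ≤ l ^ m * Complex.abs γ - 1 * Complex.abs β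
            - (l ^ m)⁻¹ * Complex.abs α := by
          have hstep : k0 ≤ Complex.abs γ - k0 := by linarith
          have h1 : k0 * l ^ N ≤ (Complex.abs γ - k0) * l ^ m :=
            calc k0 * l ^ N ≤ k0 * l ^ m :=
                  mul_le_mul_of_nonneg_left hmono hk0pos.le
              _ ≤ (Complex.abs γ - k0) * l ^ m :=
                  mul_le_mul_of_nonneg_right hstep (habs_pos m).le
          have hC' : Complex.abs β + (l ^ m)⁻¹ * Complex.abs α ≤ C := by
            rw [hC]
            have := Complex.abs.nonneg γ
            linarith
          nlinarith
        linarith
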